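/- Let A be any n×n real matrix and B any m×m real matrix. If x ∈ ℝⁿ and y ∈ ℝᵐ satisfy 1ₙᵀ x = 0 and 1ₘᵀ y = 0, then (A ⋄ B)(x ⊗ y) = 0. Consequently, the dimension of the null space of A ⋄ B is at least (n−1)(m−1). -/
import Mathlib


open Matrix Kronecker

/-- The `k × k` all-ones matrix `J_k`. -/
def onesMat (k : ℕ) : Matrix (Fin k) (Fin k) ℝ := Matrix.of fun _ _ => 1

/-- The additive Kronecker analogue `A ⋄ B = A ⊗ J_m + J_n ⊗ B`. -/
def diamond {n m : ℕ} (A : Matrix (Fin n) (Fin n) ℝ) (B : Matrix (Fin m) (Fin m) ℝ) :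
    Matrix (Fin n × Fin m) (Fin n × Fin m) ℝ :=
  A ⊗ₖ onesMat m + onesMat n ⊗ₖ B

/-- The Kronecker product of two vectors. -/
def vecKron {n m : ℕ} (x : Fin n → ℝ) (y : Fin m → ℝ) : Fin n × Fin m → ℝ :=
  fun p => x p.1 * y p.2

lemma diamond_kill {n m : ℕ}
    (A : Matrix (Fin n) (Fin n) ℝ) (B : Matrix (Fin m) (Fin m) ℝ)
    (x : Fin n → ℝ) (y : Fin m → ℝ) (hx : ∑ i, x i = 0) (hy : ∑ j, y j = 0) :
    (diamond A B).mulVec (vecKron x y) = 0 := by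
  funext p
  obtain ⟨i, j⟩ := p
  simp only [diamond, Matrix.mulVec, dotProduct, Matrix.add_apply,
    Matrix.kroneckerMap_apply, onesMat, Matrix.of_apply, vecKron, Fintype.sum_prod_type,
    Pi.zero_apply]
  have key : ∀ (k : Fin n) (l : Fin m),
      (A i k * 1 + 1 * B j l) * (x k * y l) = (A i k * x k) * y l + x k * (B j l * y l) :=
    fun k l => by ring
  simp_rw [key, Finset.sum_add_distrib, ← Finset.mul_sum, hy, mul_zero, Finset.sum_const_zero,
    zero_add, ← Finset.sum_mul, hx, zero_mul]

lemma aux_dim {n m : ℕ} (hn : 2 ≤ n) (hm : 2 ≤ m) (K : Submodule ℝ (Fin n × Fin m → ℝ))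
    (hK : ∀ (x : Fin n → ℝ) (y : Fin m → ℝ), ∑ i, x i = 0 → ∑ j, y j = 0 → vecKron x y ∈ K) :
    (n - 1) * (m - 1) ≤ Module.finrank ℝ K := by
  set u : Fin (n-1) → Fin n → ℝ := fun i a =>
    (if a = Fin.castLE (Nat.sub_le n 1) i then 1 else 0) - (if a = ⟨n-1, by omega⟩ then 1 else 0)
    with hu_def
  set v : Fin (m-1) → Fin m → ℝ := fun j b =>
    (if b = Fin.castLE (Nat.sub_le m 1) j then 1 else 0) - (if b = ⟨m-1, by omega⟩ then 1 else 0)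
    with hv_def
  have hu_sum : ∀ i, ∑ a, u i a = 0 := by
    intro i; simp [hu_def, Finset.sum_sub_distrib]
  have hv_sum : ∀ j, ∑ b, v j b = 0 := by
    intro j; simp [hv_def, Finset.sum_sub_distrib]
  have hu_delta : ∀ i k : Fin (n-1),
      u i (Fin.castLE (Nat.sub_le n 1) k) = if k = i then 1 else 0 := by
    intro i k
    have h2 : (Fin.castLE (Nat.sub_le n 1) k : Fin n) ≠ ⟨n-1, by omega⟩ := by
      intro h
      have := k.isLt
      simp [Fin.ext_iff] at h
      omega
    simp [hu_def, h2, Fin.castLE_inj]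
  have hv_delta : ∀ j l : Fin (m-1),
      v j (Fin.castLE (Nat.sub_le m 1) l) = if l = j then 1 else 0 := by
    intro j l
    have h2 : (Fin.castLE (Nat.sub_le m 1) l : Fin m) ≠ ⟨m-1, by omega⟩ := by
      intro h
      have := l.isLt
      simp [Fin.ext_iff] at h
      omega
    simp [hv_def, h2, Fin.castLE_inj]
  set f : Fin (n-1) × Fin (m-1) → K :=
    fun p => ⟨vecKron (u p.1) (v p.2), hK _ _ (hu_sum p.1) (hv_sum p.2)⟩ with hf_def
  have hli : LinearIndependent ℝ f := by
    apply LinearIndependent.of_comp K.subtype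
    rw [Fintype.linearIndependent_iff]
    intro g hg p
    obtain ⟨k, l⟩ := p
    have := congrFun hg (Fin.castLE (Nat.sub_le n 1) k, Fin.castLE (Nat.sub_le m 1) l)
    simp only [Function.comp_apply, Submodule.coe_subtype, hf_def, Finset.sum_apply,
      Pi.smul_apply, smul_eq_mul, vecKron, Pi.zero_apply, Fintype.sum_prod_type] at this
    simpa [hu_delta, hv_delta, Finset.sum_ite_eq', mul_ite] using this
  have hcard := hli.fintype_card_le_finrank
  simpa using hcard

/-- For any square real matrices `A`, `B`, if the entries of `x` and of `y`
each sum to zero then `(A ⋄ B)(x ⊗ y) = 0`; consequently the null space of `A ⋄ B` has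
dimension at least `(n−1)(m−1)`. -/
theorem diamond_nullity {n m : ℕ}
    (A : Matrix (Fin n) (Fin n) ℝ) (B : Matrix (Fin m) (Fin m) ℝ) :
    (∀ (x : Fin n → ℝ) (y : Fin m → ℝ), ∑ i, x i = 0 → ∑ j, y j = 0 →
        (diamond A B).mulVec (vecKron x y) = 0) ∧
      (n - 1) * (m - 1) ≤ Module.finrank ℝ (LinearMap.ker (diamond A B).mulVecLin) := by
  refine ⟨diamond_kill A B, ?_⟩
  by_cases hn : 2 ≤ n
  · by_cases hm : 2 ≤ m
    · exact aux_dim hn hm _ fun x y hx hy => by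
        rw [LinearMap.mem_ker, Matrix.mulVecLin_apply]
        exact diamond_kill A B x y hx hy
    · have : m - 1 = 0 := by omega
      simp [this]
  · have : n - 1 = 0 := by omega
    simp [this]
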